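/- (Polynomial-weighted symmetry) Let A, B, q, m be integers with A + B ≥ q ≥ 0 and let P(w) be a rational polynomial of degree q. Then Σ_{w ∈ ℤ} P(w)·[A; w]·[B; m−w] = Σ_{w ∈ ℤ} P(w)·[A; A−w]·[B; B−m+w], where [·;·] is the modified binomial coefficient and both sums have finitely many nonzero terms. -/

import Mathlib

/-- The modified binomial coefficient `[A; B]` of Lee. -/
def mbinom (A B : ℤ) : ℚ :=
  if B < A then ∏ i ∈ Finset.range (A - B).toNat, (((A : ℚ) - i) / (((A : ℚ) - (B : ℚ)) - i))
  else if A = B then 1 else 0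

open Finset Polynomial

/-- Generalized binomial coefficient with rational top and integer bottom. -/
noncomputable def ch (x : ℚ) (k : ℤ) : ℚ := if 0 ≤ k then Ring.choose x k.toNat else 0

lemma ch_neg (x : ℚ) {k : ℤ} (h : k < 0) : ch x k = 0 := by
  rw [ch, if_neg (by omega)]

lemma ch_nonneg (x : ℚ) {k : ℤ} (h : 0 ≤ k) : ch x k = Ring.choose x k.toNat := by
  rw [ch, if_pos h]

lemma descPoch_smeval_prod (x : ℚ) (n : ℕ) :
    (descPochhammer ℤ n).smeval x = ∏ i ∈ range n, (x - i) := by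
  induction n with
  | zero => simp [descPochhammer_zero, Polynomial.smeval_one]
  | succ n ih =>
    rw [descPochhammer_succ_right, Polynomial.smeval_mul, ih, prod_range_succ,
      Polynomial.smeval_sub, Polynomial.smeval_X, Polynomial.smeval_natCast]
    simp

lemma descPoch_eval_prod (x : ℚ) (n : ℕ) :
    (descPochhammer ℚ n).eval x = ∏ i ∈ range n, (x - i) := by
  induction n with
  | zero => simp [descPochhammer_zero]
  | succ n ih => rw [descPochhammer_succ_eval, ih, prod_range_succ]

lemma choose_factorial (x : ℚ) (n : ℕ) :
    (n.factorial : ℚ) * Ring.choose x n = ∏ i ∈ range n, (x - i) := by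
  rw [← descPoch_smeval_prod, Ring.descPochhammer_eq_factorial_smul_choose,
    nsmul_eq_mul]

lemma mb_eq (A B : ℤ) : mbinom A B = ch (A : ℚ) (A - B) := by
  rcases lt_trichotomy B A with h | h | h
  · rw [mbinom, if_pos h, ch_nonneg _ (by omega)]
    set n := (A - B).toNat with hn
    have hAB : ((A : ℚ) - (B : ℚ)) = (n : ℚ) := by
      have : ((A - B : ℤ) : ℚ) = ((n : ℤ) : ℚ) := by norm_cast; omega
      push_cast at this ⊢; linarith
    have hden : ∏ i ∈ range n, (((A : ℚ) - (B : ℚ)) - i) = (n.factorial : ℚ) := by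
      rw [hAB, ← descPoch_smeval_prod, descPochhammer_smeval_eq_descFactorial,
        Nat.descFactorial_self]
    rw [prod_div_distrib, hden, ← choose_factorial]
    have : (n.factorial : ℚ) ≠ 0 := by positivity
    field_simp
  · subst h
    rw [mbinom, if_neg (lt_irrefl _), if_pos rfl, sub_self, ch_nonneg _ le_rfl]
    simp [Ring.choose_zero_right]
  · rw [mbinom, if_neg (by omega), if_neg (by omega), ch_neg _ (by omega)]

lemma mb_zero {A B : ℤ} (h : A < B) : mbinom A B = 0 := by
  rw [mb_eq, ch_neg _ (by omega)]

lemma ch_natCast (N : ℕ) {k : ℤ} (hk : 0 ≤ k) :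
    ch (N : ℚ) k = (N.choose k.toNat : ℚ) := by
  rw [ch_nonneg _ hk, Ring.choose_natCast]

lemma ch_symm (N : ℕ) (M : ℤ) : ch (N : ℚ) M = ch (N : ℚ) ((N : ℤ) - M) := by
  by_cases hM : 0 ≤ M
  · by_cases hMN : M ≤ (N : ℤ)
    · rw [ch_natCast _ hM, ch_natCast _ (by omega)]
      rw [show ((N : ℤ) - M).toNat = N - M.toNat by omega]
      have h := Nat.choose_symm (show M.toNat ≤ N by omega)
      exact_mod_cast h.symm
    · rw [ch_natCast _ hM, Nat.choose_eq_zero_of_lt (by omega), ch_neg _ (by omega)]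
      simp
  · rw [ch_neg _ (by omega), ch_natCast _ (by omega),
      Nat.choose_eq_zero_of_lt (by omega)]
    simp

/-- trinomial-revision identity, version 1. -/
lemma P1 (x : ℚ) (j : ℕ) (k : ℤ) :
    Ring.choose (x - (k : ℚ)) j * ch x k = Ring.choose x j * ch (x - (j : ℚ)) k := by
  by_cases hk : 0 ≤ k
  · set K := k.toNat with hK
    have hkK : (k : ℚ) = (K : ℚ) := by
      have : ((K : ℤ) : ℚ) = (K : ℚ) := by push_cast; ring
      rw [← this]; norm_cast; omega
    rw [ch_nonneg _ hk, ch_nonneg _ hk, hkK]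
    have h1 := Ring.choose_smul_choose x (n := K + j) (k := K) (Nat.le_add_right K j)
    have h2 := Ring.choose_smul_choose x (n := K + j) (k := j) (Nat.le_add_left j K)
    rw [Nat.add_sub_cancel_left, nsmul_eq_mul] at h1
    rw [Nat.add_sub_cancel, nsmul_eq_mul] at h2
    have hcs : ((K + j).choose K : ℚ) = ((K + j).choose j : ℚ) := by
      have h := @Nat.choose_symm_add K j
      exact_mod_cast h
    calc Ring.choose (x - (K : ℚ)) j * Ring.choose x K
        = Ring.choose x K * Ring.choose (x - (K : ℚ)) j := by ring
      _ = ((K + j).choose K : ℚ) * Ring.choose x (K + j) := h1.symm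
      _ = ((K + j).choose j : ℚ) * Ring.choose x (K + j) := by rw [hcs]
      _ = Ring.choose x j * Ring.choose (x - (j : ℚ)) K := h2
  · rw [ch_neg _ (by omega), ch_neg _ (by omega), mul_zero, mul_zero]

/-- subset-of-subset identity, version 2. -/
lemma P2 (x : ℚ) (j : ℕ) (w : ℤ) :
    Ring.choose ((w : ℚ)) j * ch x w = Ring.choose x j * ch (x - (j : ℚ)) (w - j) := by
  by_cases hw : 0 ≤ w
  · set W := w.toNat with hW
    have hwW : (w : ℚ) = (W : ℚ) := by
      have : ((W : ℤ) : ℚ) = (W : ℚ) := by push_cast; ring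
      rw [← this]; norm_cast; omega
    rw [hwW, Ring.choose_natCast]
    by_cases hj : (j : ℤ) ≤ w
    · have hjW : j ≤ W := by omega
      rw [ch_nonneg _ hw, ch_nonneg _ (by omega : (0:ℤ) ≤ w - j)]
      have h := Ring.choose_smul_choose x (n := W) (k := j) hjW
      rw [nsmul_eq_mul] at h
      rw [show (w - (j : ℤ)).toNat = W - j by omega]
      exact h
    · rw [ch_neg (x - (j : ℚ)) (show w - (j : ℤ) < 0 by omega),
        Nat.choose_eq_zero_of_lt (show W < j by omega)]
      simp
  · rw [ch_neg _ (by omega), ch_neg _ (by omega), mul_zero, mul_zero]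

/-- Chu–Vandermonde for `ch`. -/
lemma VD (x y : ℚ) (M : ℤ) :
    ∑ k ∈ Icc (0 : ℤ) M, ch x k * ch y (M - k) = ch (x + y) M := by
  by_cases hM : 0 ≤ M
  · set K := M.toNat with hK
    rw [ch_nonneg _ hM, Ring.add_choose_eq K (Commute.all x y),
      Finset.Nat.sum_antidiagonal_eq_sum_range_succ_mk]
    refine Finset.sum_nbij' (fun k => k.toNat) (fun i => (i : ℤ)) ?_ ?_ ?_ ?_ ?_
    · intro k hk
      simp only [mem_Icc] at hk
      simp only [mem_range]
      omega
    · intro i hi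
      simp only [mem_range] at hi
      simp only [mem_Icc]
      omega
    · intro k hk
      simp only [mem_Icc] at hk
      omega
    · intro i _
      simp
    · intro k hk
      simp only [mem_Icc] at hk
      dsimp only
      rw [ch_nonneg _ hk.1, ch_nonneg _ (by omega : (0:ℤ) ≤ M - k),
        show (M - k).toNat = K - k.toNat by omega]
  · rw [Icc_eq_empty (by omega), sum_empty, ch_neg _ (by omega)]

/-- Main monomial lemma, LHS form. -/
lemma LHSML (A B m : ℤ) (j : ℕ) :
    ∑ w ∈ Icc (m - B) A,
        Ring.choose ((w : ℚ)) j * (ch (A : ℚ) (A - w) * ch (B : ℚ) (B - m + w))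
      = Ring.choose (A : ℚ) j * ch ((A : ℚ) - j + B) (A + B - m) := by
  have hre : ∑ w ∈ Icc (m - B) A,
        Ring.choose ((w : ℚ)) j * (ch (A : ℚ) (A - w) * ch (B : ℚ) (B - m + w))
      = ∑ k ∈ Icc (0 : ℤ) (A + B - m),
        Ring.choose ((A : ℚ) - (k : ℚ)) j * (ch (A : ℚ) k * ch (B : ℚ) ((A + B - m) - k)) := by
    refine Finset.sum_nbij' (fun w => A - w) (fun k => A - k) ?_ ?_ ?_ ?_ ?_
    · intro w hw; simp only [mem_Icc] at hw ⊢; omega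
    · intro k hk; simp only [mem_Icc] at hk ⊢; omega
    · intro w _; omega
    · intro k _; omega
    · intro w hw
      have h1 : ((w : ℚ)) = (A : ℚ) - ((A - w : ℤ) : ℚ) := by push_cast; ring
      have h2 : A - w = (A - w : ℤ) := rfl
      have h3 : B - m + w = (A + B - m) - (A - w) := by ring
      rw [h1, h3]
  rw [hre]
  have hterm : ∀ k ∈ Icc (0 : ℤ) (A + B - m),
      Ring.choose ((A : ℚ) - (k : ℚ)) j * (ch (A : ℚ) k * ch (B : ℚ) ((A + B - m) - k))
        = Ring.choose (A : ℚ) j *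
            (ch ((A : ℚ) - j) k * ch (B : ℚ) ((A + B - m) - k)) := by
    intro k _
    rw [← mul_assoc, P1 (A : ℚ) j k, mul_assoc]
  rw [Finset.sum_congr rfl hterm, ← Finset.mul_sum, VD]

/-- Main monomial lemma, RHS form. -/
lemma RHSML (A B m : ℤ) (j : ℕ) :
    ∑ w ∈ Icc (0 : ℤ) m,
        Ring.choose ((w : ℚ)) j * (ch (A : ℚ) w * ch (B : ℚ) (m - w))
      = Ring.choose (A : ℚ) j * ch ((A : ℚ) - j + B) (m - j) := by
  have hterm : ∀ w ∈ Icc (0 : ℤ) m,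
      Ring.choose ((w : ℚ)) j * (ch (A : ℚ) w * ch (B : ℚ) (m - w))
        = Ring.choose (A : ℚ) j *
            (ch ((A : ℚ) - j) (w - j) * ch (B : ℚ) (m - w)) := by
    intro w _
    rw [← mul_assoc, P2 (A : ℚ) j w, mul_assoc]
  rw [Finset.sum_congr rfl hterm, ← Finset.mul_sum]
  congr 1
  have hre : ∑ w ∈ Icc (0 : ℤ) m, ch ((A : ℚ) - j) (w - j) * ch (B : ℚ) (m - w)
      = ∑ v ∈ Icc (-(j : ℤ)) (m - j), ch ((A : ℚ) - j) v * ch (B : ℚ) ((m - j) - v) := by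
    refine Finset.sum_nbij' (fun w => w - (j : ℤ)) (fun v => v + (j : ℤ)) ?_ ?_ ?_ ?_ ?_
    · intro w hw; simp only [mem_Icc] at hw ⊢; omega
    · intro v hv; simp only [mem_Icc] at hv ⊢; omega
    · intro w _; omega
    · intro v _; omega
    · intro w _
      rw [show m - w = (m - (j:ℤ)) - (w - j) by ring]
  rw [hre, ← VD ((A : ℚ) - j) (B : ℚ) (m - j)]
  rw [← Finset.sum_subset (Finset.Icc_subset_Icc (by omega : -(j:ℤ) ≤ 0) le_rfl)]
  intro v hv hv'
  simp only [mem_Icc] at hv hv'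
  rw [ch_neg _ (by omega), zero_mul]

/-- Expansion of a polynomial in the generalized binomial basis. -/
lemma exp_lemma : ∀ (n : ℕ) (P : ℚ[X]), P.natDegree ≤ n →
    ∃ a : ℕ → ℚ, ∀ x : ℚ, P.eval x = ∑ j ∈ range (n + 1), a j * Ring.choose x j := by
  intro n
  induction n with
  | zero =>
    intro P hP
    refine ⟨fun _ => P.coeff 0, fun x => ?_⟩
    conv_lhs => rw [Polynomial.eq_C_of_natDegree_le_zero hP]
    simp [Ring.choose_zero_right]
  | succ n ih =>
    intro P hP
    set c := P.coeff (n + 1) with hc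
    set D := descPochhammer ℚ (n + 1) with hD
    have hmonic : D.Monic := monic_descPochhammer ℚ (n + 1)
    have hdeg : D.natDegree = n + 1 := descPochhammer_natDegree (R := ℚ) (n + 1)
    have hP' : (P - Polynomial.C c * D).natDegree ≤ n := by
      rw [Polynomial.natDegree_le_iff_coeff_eq_zero]
      intro N hN
      rw [Polynomial.coeff_sub, Polynomial.coeff_C_mul]
      rcases eq_or_lt_of_le (Nat.succ_le_of_lt hN) with h | h
      · have hD1 : D.coeff N = 1 := by
          have hNd : N = D.natDegree := by omega
          rw [hNd]; exact hmonic.coeff_natDegree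
        have hNn : N = n + 1 := by omega
        rw [hD1, mul_one, hNn, ← hc, sub_self]
      · rw [Polynomial.coeff_eq_zero_of_natDegree_lt (lt_of_le_of_lt hP h),
          Polynomial.coeff_eq_zero_of_natDegree_lt (by rw [hdeg]; exact h)]
        simp
    obtain ⟨a, ha⟩ := ih _ hP'
    refine ⟨fun j => if j = n + 1 then (n + 1).factorial * c else a j, fun x => ?_⟩
    have hDx : D.eval x = ((n + 1).factorial : ℚ) * Ring.choose x (n + 1) := by
      rw [choose_factorial, hD, descPoch_eval_prod]
    have hx := ha x
    rw [Polynomial.eval_sub, Polynomial.eval_mul, Polynomial.eval_C] at hx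
    rw [Finset.sum_range_succ]
    have hrest : ∑ j ∈ range (n + 1),
        (if j = n + 1 then ((n + 1).factorial : ℚ) * c else a j) * Ring.choose x j
        = ∑ j ∈ range (n + 1), a j * Ring.choose x j := by
      refine Finset.sum_congr rfl fun j hj => ?_
      rw [if_neg (by simp only [mem_range] at hj; omega)]
    dsimp only
    rw [hrest, if_pos rfl, ← hx, hDx]
    ring

theorem stmt_9 (A B m : ℤ) (q : ℕ) (hq : (q : ℤ) ≤ A + B)
    (P : Polynomial ℚ) (hP : P.natDegree = q) :
    ∑ᶠ w : ℤ, P.eval (w : ℚ) * mbinom A w * mbinom B (m - w)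
      = ∑ᶠ w : ℤ, P.eval (w : ℚ) * mbinom A (A - w) * mbinom B (B - m + w) := by
  have hsupL : Function.support (fun w : ℤ => P.eval (w : ℚ) * mbinom A w * mbinom B (m - w))
      ⊆ ↑(Icc (m - B) A) := by
    intro w hw
    simp only [Function.mem_support] at hw
    rw [Finset.coe_Icc, Set.mem_Icc]
    by_contra hcon
    push_neg at hcon
    rcases lt_or_ge w (m - B) with h | h
    · exact hw (by rw [mb_zero (by omega : B < m - w), mul_zero])
    · exact hw (by rw [mb_zero (hcon h), mul_zero, zero_mul])
  have hsupR : Function.support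
      (fun w : ℤ => P.eval (w : ℚ) * mbinom A (A - w) * mbinom B (B - m + w))
      ⊆ ↑(Icc (0 : ℤ) m) := by
    intro w hw
    simp only [Function.mem_support] at hw
    rw [Finset.coe_Icc, Set.mem_Icc]
    by_contra hcon
    push_neg at hcon
    rcases lt_or_ge w 0 with h | h
    · exact hw (by rw [mb_zero (by omega : A < A - w), mul_zero, zero_mul])
    · exact hw (by rw [mb_zero (by omega : B < B - m + w), mul_zero])
  rw [finsum_eq_sum_of_support_subset _ hsupL, finsum_eq_sum_of_support_subset _ hsupR]
  obtain ⟨a, ha⟩ := exp_lemma q P (le_of_eq hP)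
  have hL : ∀ w : ℤ, P.eval (w : ℚ) * mbinom A w * mbinom B (m - w)
      = ∑ j ∈ range (q + 1),
          a j * (Ring.choose ((w : ℚ)) j * (ch (A : ℚ) (A - w) * ch (B : ℚ) (B - m + w))) := by
    intro w
    rw [ha, mb_eq A w, mb_eq B (m - w), show (B : ℤ) - (m - w) = B - m + w by ring,
      Finset.sum_mul, Finset.sum_mul]
    exact Finset.sum_congr rfl fun j _ => by ring
  have hR : ∀ w : ℤ, P.eval (w : ℚ) * mbinom A (A - w) * mbinom B (B - m + w)
      = ∑ j ∈ range (q + 1),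
          a j * (Ring.choose ((w : ℚ)) j * (ch (A : ℚ) w * ch (B : ℚ) (m - w))) := by
    intro w
    rw [ha, mb_eq A (A - w), mb_eq B (B - m + w),
      show (A : ℤ) - (A - w) = w by ring, show (B : ℤ) - (B - m + w) = m - w by ring,
      Finset.sum_mul, Finset.sum_mul]
    exact Finset.sum_congr rfl fun j _ => by ring
  calc ∑ w ∈ Icc (m - B) A, P.eval (w : ℚ) * mbinom A w * mbinom B (m - w)
      = ∑ w ∈ Icc (m - B) A, ∑ j ∈ range (q + 1),
          a j * (Ring.choose ((w : ℚ)) j * (ch (A : ℚ) (A - w) * ch (B : ℚ) (B - m + w))) :=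
        Finset.sum_congr rfl fun w _ => hL w
    _ = ∑ j ∈ range (q + 1), ∑ w ∈ Icc (m - B) A,
          a j * (Ring.choose ((w : ℚ)) j * (ch (A : ℚ) (A - w) * ch (B : ℚ) (B - m + w))) :=
        Finset.sum_comm
    _ = ∑ j ∈ range (q + 1), ∑ w ∈ Icc (0 : ℤ) m,
          a j * (Ring.choose ((w : ℚ)) j * (ch (A : ℚ) w * ch (B : ℚ) (m - w))) := by
        refine Finset.sum_congr rfl fun j hj => ?_
        rw [← Finset.mul_sum, ← Finset.mul_sum]
        congr 1
        rw [LHSML A B m j, RHSML A B m j]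
        congr 1
        have hj' : (j : ℤ) ≤ A + B := by
          simp only [mem_range] at hj; omega
        set N : ℕ := (A + B - j).toNat with hN
        have hNZ : ((N : ℤ)) = A + B - j := by omega
        have hcast : (A : ℚ) - j + B = (N : ℚ) := by
          have : ((N : ℤ) : ℚ) = (N : ℚ) := by push_cast; ring
          rw [← this, hNZ]; push_cast; ring
        rw [hcast, ch_symm N (A + B - m), hNZ,
          show A + B - (j : ℤ) - (A + B - m) = m - j by ring]
    _ = ∑ w ∈ Icc (0 : ℤ) m, ∑ j ∈ range (q + 1),
          a j * (Ring.choose ((w : ℚ)) j * (ch (A : ℚ) w * ch (B : ℚ) (m - w))) :=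
        Finset.sum_comm
    _ = ∑ w ∈ Icc (0 : ℤ) m, P.eval (w : ℚ) * mbinom A (A - w) * mbinom B (B - m + w) :=
        Finset.sum_congr rfl fun w _ => (hR w).symm
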